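/- arXiv:1711.03187 — 2 statements merged into one kernel-verified Lean document; each statement's English description precedes it below -/
import Mathlib

section
/- The function Q^3 is an eigenfunction of the linearized operator L with eigenvalue −8; that is, L(Q^3) = −(Q^3)'' + Q^3 − 5 Q^4 · Q^3 = −8 Q^3 pointwise on ℝ. Moreover Q^3 is positive, even, and satisfies |Q^3(x)| ≤ c e^{-δ_0 |x|} for some c, δ_0 > 0. -/
open MeasureTheory Real Filter

noncomputable section

/-- The ground state `Q(x) = 3^{1/4} (cosh 2x)^{-1/2}`, the unique positive even
`H¹` solution of `Q'' - Q + Q⁵ = 0`. -/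
def Q (x : ℝ) : ℝ := (3 : ℝ) ^ ((1 : ℝ)/4) * Real.cosh (2*x) ^ (-(1:ℝ)/2)

/-- The square of the `H¹(ℝ)` norm, `‖f‖_{H¹}² = ∫ (f² + (f')²)`. -/
def H1normSq (f : ℝ → ℝ) : ℝ := ∫ x, ((f x)^2 + (deriv f x)^2)

/-- Membership in `H¹(ℝ)` (modeled via `L²` membership of `f` and of its derivative). -/
def inH1 (f : ℝ → ℝ) : Prop := MemLp f 2 volume ∧ MemLp (deriv f) 2 volume

/-- The linearized operator around `Q`: `Lf = -f'' + f - 5 Q⁴ f`. -/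
def Lop (f : ℝ → ℝ) (x : ℝ) : ℝ := -(deriv (deriv f) x) + f x - 5 * (Q x)^4 * f x

/-- The generator of the scaling symmetry: `Λf = (1/2) f + y f'`. -/
def Lam (f : ℝ → ℝ) (y : ℝ) : ℝ := (1/2) * f y + y * deriv f y

/-- The higher-order remainder `R(ε) = 10 Q³ ε² + 10 Q² ε³ + 5 Q ε⁴ + ε⁵`. -/
def Rrem (f : ℝ → ℝ) (y : ℝ) : ℝ :=
  10 * (Q y)^3 * (f y)^2 + 10 * (Q y)^2 * (f y)^3 + 5 * Q y * (f y)^4 + (f y)^5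


section QcubedAux

lemma cosh2_pos (x : ℝ) : 0 < Real.cosh (2*x) := Real.cosh_pos (2*x)

lemma Qcube_eq (x : ℝ) : (Q x)^3 = (3:ℝ) ^ ((3:ℝ)/4) * Real.cosh (2*x) ^ (-(3:ℝ)/2) := by
  have h3 : (0:ℝ) ≤ 3 := by norm_num
  have hc : (0:ℝ) ≤ Real.cosh (2*x) := (cosh2_pos x).le
  rw [Q, mul_pow, ← Real.rpow_natCast ((3:ℝ) ^ ((1:ℝ)/4)) 3, ← Real.rpow_mul h3,
    ← Real.rpow_natCast (Real.cosh (2*x) ^ (-(1:ℝ)/2)) 3, ← Real.rpow_mul hc]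
  norm_num

lemma hcosh (x : ℝ) : HasDerivAt (fun y : ℝ => Real.cosh (2*y)) (Real.sinh (2*x) * 2) x :=
  (Real.hasDerivAt_cosh (2*x)).comp x ((hasDerivAt_id x).const_mul 2) |>.congr_deriv (by ring)

lemma hsinh (x : ℝ) : HasDerivAt (fun y : ℝ => Real.sinh (2*y)) (Real.cosh (2*x) * 2) x :=
  (Real.hasDerivAt_sinh (2*x)).comp x ((hasDerivAt_id x).const_mul 2) |>.congr_deriv (by ring)

lemma hD1 (x : ℝ) : HasDerivAt (fun y => (Q y)^3)
    ((-3 * (3:ℝ) ^ ((3:ℝ)/4)) * (Real.sinh (2*x) * Real.cosh (2*x) ^ (-(5:ℝ)/2))) x := by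
  have h := ((hcosh x).rpow_const (p := -(3:ℝ)/2)
    (Or.inl (cosh2_pos x).ne')).const_mul ((3:ℝ) ^ ((3:ℝ)/4))
  have he : (-(3:ℝ)/2 - 1) = -(5:ℝ)/2 := by norm_num
  rw [he] at h
  refine (h.congr_deriv (by ring)).congr_of_eventuallyEq ?_
  filter_upwards with y using (Qcube_eq y).symm ▸ rfl

lemma hD2 (x : ℝ) : HasDerivAt
    (fun y => (-3 * (3:ℝ) ^ ((3:ℝ)/4)) * (Real.sinh (2*y) * Real.cosh (2*y) ^ (-(5:ℝ)/2)))
    ((-3 * (3:ℝ) ^ ((3:ℝ)/4)) * ((Real.cosh (2*x) * 2) * Real.cosh (2*x) ^ (-(5:ℝ)/2)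
      + Real.sinh (2*x) * ((Real.sinh (2*x) * 2) * (-(5:ℝ)/2) * Real.cosh (2*x) ^ (-(7:ℝ)/2)))) x := by
  have hr := (hcosh x).rpow_const (p := -(5:ℝ)/2) (Or.inl (cosh2_pos x).ne')
  have he : (-(5:ℝ)/2 - 1) = -(7:ℝ)/2 := by norm_num
  rw [he] at hr
  exact ((hsinh x).mul hr).const_mul _

lemma Q_pos (x : ℝ) : 0 < Q x :=
  mul_pos (Real.rpow_pos_of_pos (by norm_num) _) (Real.rpow_pos_of_pos (cosh2_pos x) _)

lemma eigen_eq (x : ℝ) :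
    -(deriv (deriv fun y => (Q y)^3) x) + (Q x)^3 - 5 * (Q x)^4 * (Q x)^3
        = -8 * (Q x)^3 := by
  have hd1 : (deriv fun y => (Q y)^3) = fun y =>
      (-3 * (3:ℝ) ^ ((3:ℝ)/4)) * (Real.sinh (2*y) * Real.cosh (2*y) ^ (-(5:ℝ)/2)) :=
    funext fun y => (hD1 y).deriv
  rw [hd1, (hD2 x).deriv, Qcube_eq]
  have hc := cosh2_pos x
  set c := Real.cosh (2*x) with hcdef
  set s := Real.sinh (2*x) with hsdef
  have hs2 : s^2 = c^2 - 1 := by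
    have := Real.cosh_sq (2*x); rw [← hcdef, ← hsdef] at this; linarith
  have hQ4 : (Q x)^4 = 3 * c ^ (-(2:ℝ)) := by
    rw [Q, mul_pow, ← Real.rpow_natCast ((3:ℝ) ^ ((1:ℝ)/4)) 4, ← Real.rpow_mul (by norm_num),
      ← Real.rpow_natCast (c ^ (-(1:ℝ)/2)) 4, ← Real.rpow_mul hc.le]
    norm_num
  rw [hQ4]
  have e1 : c * c ^ (-(5:ℝ)/2) = c ^ (-(3:ℝ)/2) := by
    have h := Real.rpow_add hc 1 (-(5:ℝ)/2)
    rw [Real.rpow_one] at h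
    norm_num at h
    linarith [h]
  have e2 : s^2 * c ^ (-(7:ℝ)/2) = c ^ (-(3:ℝ)/2) - c ^ (-(7:ℝ)/2) := by
    rw [hs2, sub_mul, one_mul, ← Real.rpow_natCast c 2, ← Real.rpow_add hc]
    norm_num
  have e3 : c ^ (-(2:ℝ)) * c ^ (-(3:ℝ)/2) = c ^ (-(7:ℝ)/2) := by
    rw [← Real.rpow_add hc]; norm_num
  linear_combination (6*(3:ℝ)^((3:ℝ)/4)) * e1 - (15*(3:ℝ)^((3:ℝ)/4)) * e2 - (15*(3:ℝ)^((3:ℝ)/4)) * e3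

lemma decay_bound (x : ℝ) :
    |(Q x)^3| ≤ ((3:ℝ) ^ ((3:ℝ)/4) * (2:ℝ) ^ ((3:ℝ)/2)) * Real.exp (-3 * |x|) := by
  have hc := cosh2_pos x
  have hle : Real.exp (2*|x|) / 2 ≤ Real.cosh (2*x) := by
    rw [Real.cosh_eq]
    rcases abs_cases x with ⟨h1, _⟩ | ⟨h1, _⟩ <;> rw [h1] <;>
      [skip; rw [show 2 * -x = -(2*x) by ring]] <;>
      nlinarith [Real.exp_pos (2*x), Real.exp_pos (-(2*x))]
  have hpos : (0:ℝ) < Real.exp (2*|x|) / 2 := by positivity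
  have hmono : Real.cosh (2*x) ^ (-(3:ℝ)/2) ≤ (Real.exp (2*|x|) / 2) ^ (-(3:ℝ)/2) :=
    Real.rpow_le_rpow_of_nonpos hpos hle (by norm_num)
  have hkey : (Real.exp (2*|x|) / 2) ^ (-(3:ℝ)/2)
      = (2:ℝ) ^ ((3:ℝ)/2) * Real.exp (-3 * |x|) := by
    rw [Real.div_rpow (Real.exp_nonneg _) (by norm_num), ← Real.exp_mul,
      show (-(3:ℝ)/2) = -((3:ℝ)/2) by norm_num, Real.rpow_neg (by norm_num : (0:ℝ) ≤ 2)]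
    rw [div_inv_eq_mul, mul_comm (Real.exp _)]
    congr 1
    exact congrArg Real.exp (by ring)
  rw [abs_of_pos (pow_pos (Q_pos x) 3), Qcube_eq]
  calc (3:ℝ) ^ ((3:ℝ)/4) * Real.cosh (2*x) ^ (-(3:ℝ)/2)
      ≤ (3:ℝ) ^ ((3:ℝ)/4) * ((Real.exp (2*|x|) / 2) ^ (-(3:ℝ)/2)) := by
        exact mul_le_mul_of_nonneg_left hmono (Real.rpow_nonneg (by norm_num) _)
    _ = ((3:ℝ) ^ ((3:ℝ)/4) * (2:ℝ) ^ ((3:ℝ)/2)) * Real.exp (-3 * |x|) := by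
        rw [hkey]; ring

end QcubedAux

/-- **`Q³` is an eigenfunction of `L` with eigenvalue `-8`:**
`L(Q³) = -(Q³)'' + Q³ - 5 Q⁴ · Q³ = -8 Q³` pointwise on `ℝ`. Moreover `Q³` is
positive, even, and exponentially decaying. -/
theorem Qcubed_eigenfunction :
    (∀ x : ℝ, -(deriv (deriv fun y => (Q y)^3) x) + (Q x)^3 - 5 * (Q x)^4 * (Q x)^3
        = -8 * (Q x)^3) ∧
    (∀ x : ℝ, 0 < (Q x)^3) ∧
    (∀ x : ℝ, (Q (-x))^3 = (Q x)^3) ∧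
    (∃ c δ₀ : ℝ, 0 < c ∧ 0 < δ₀ ∧ ∀ x : ℝ, |(Q x)^3| ≤ c * Real.exp (-δ₀ * |x|)) := by
  refine ⟨eigen_eq, fun x => pow_pos (Q_pos x) 3, fun x => ?_,
    (3:ℝ) ^ ((3:ℝ)/4) * (2:ℝ) ^ ((3:ℝ)/2), 3, by positivity, by norm_num,
    fun x => decay_bound x⟩
  have : Real.cosh (2 * -x) = Real.cosh (2*x) := by
    rw [show 2 * -x = -(2*x) by ring, Real.cosh_neg]
  rw [Q, Q, this]
end
end

section
/- The kernel of the linearized operator L in H^1(ℝ) is spanned by Q': that is, L(Q') = 0, and every f ∈ H^1(ℝ) (twice differentiable) satisfying −f'' + f − 5 Q^4 f = 0 on ℝ is a scalar multiple of Q'. -/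
open MeasureTheory Real Filter

noncomputable section

def Qone (x : ℝ) : ℝ :=
  (-((3 : ℝ) ^ ((1 : ℝ)/4))) * Real.sinh (2*x) * (Real.cosh (2*x) ^ (-(1:ℝ)/2)) ^ 3

lemma deriv_congr {f : ℝ → ℝ} {f' g' x : ℝ} (h : HasDerivAt f f' x) (e : f' = g') :
    HasDerivAt f g' x := e ▸ h

lemma rpow_half_pow {c : ℝ} (hc : 0 < c) (n : ℕ) :
    (c ^ (-(1:ℝ)/2)) ^ n = c ^ (-(n:ℝ)/2) := by
  rw [← Real.rpow_natCast (c ^ (-(1:ℝ)/2)) n, ← Real.rpow_mul hc.le]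
  congr 1
  ring

lemma k4 : ((3:ℝ) ^ ((1:ℝ)/4)) ^ 4 = 3 := by
  rw [← Real.rpow_natCast ((3:ℝ) ^ ((1:ℝ)/4)) 4, ← Real.rpow_mul (by norm_num : (0:ℝ) ≤ 3)]
  norm_num

lemma kpos : (0:ℝ) < (3:ℝ) ^ ((1:ℝ)/4) := Real.rpow_pos_of_pos (by norm_num) _

lemma upos (x : ℝ) : (0:ℝ) < Real.cosh (2*x) ^ (-(1:ℝ)/2) :=
  Real.rpow_pos_of_pos (Real.cosh_pos _) _

lemma huc (x : ℝ) : (Real.cosh (2*x) ^ (-(1:ℝ)/2)) ^ 2 * Real.cosh (2*x) = 1 := by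
  rw [rpow_half_pow (Real.cosh_pos _) 2,
    show (-((2:ℕ):ℝ))/2 = -1 by norm_num, Real.rpow_neg_one]
  exact inv_mul_cancel₀ (Real.cosh_pos _).ne'

lemma exp_e (x : ℝ) :
    Real.cosh (2*x) ^ (-(1:ℝ)/2 - 1) = (Real.cosh (2*x) ^ (-(1:ℝ)/2)) ^ 3 := by
  rw [show (-(1:ℝ)/2 - 1) = (-((3:ℕ):ℝ))/2 by norm_num, ← rpow_half_pow (Real.cosh_pos _) 3]

lemma hcosh2 (x : ℝ) :
    HasDerivAt (fun x : ℝ => Real.cosh (2*x)) (Real.sinh (2*x) * 2) x := by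
  simpa using ((hasDerivAt_id x).const_mul (2:ℝ)).cosh

lemma hsinh2 (x : ℝ) :
    HasDerivAt (fun x : ℝ => Real.sinh (2*x)) (Real.cosh (2*x) * 2) x := by
  simpa using ((hasDerivAt_id x).const_mul (2:ℝ)).sinh

lemma hQ (x : ℝ) : HasDerivAt Q (Qone x) x := by
  have h := ((hcosh2 x).rpow_const (p := -(1:ℝ)/2)
    (Or.inl (Real.cosh_pos _).ne')).const_mul ((3:ℝ) ^ ((1:ℝ)/4))
  rw [exp_e x] at h
  exact deriv_congr h (by unfold Qone; ring)

lemma hQone (x : ℝ) : HasDerivAt Qone (Q x - Q x ^ 5) x := by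
  have hp := (hcosh2 x).rpow_const (p := -(1:ℝ)/2) (Or.inl (Real.cosh_pos _).ne')
  have h := (((hsinh2 x).const_mul (-((3 : ℝ) ^ ((1 : ℝ)/4)))).mul (hp.pow 3))
  rw [exp_e x] at h
  refine deriv_congr h ?_
  have hs2 : Real.sinh (2*x) ^ 2 = Real.cosh (2*x) ^ 2 - 1 := Real.sinh_sq _
  have hu2 := huc x
  have hk4 := k4
  unfold Q
  set k := (3:ℝ)^((1:ℝ)/4)
  set u := Real.cosh (2*x) ^ (-(1:ℝ)/2)
  set c := Real.cosh (2*x)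
  set s := Real.sinh (2*x)
  push_cast
  norm_num
  have hu' : Real.cosh (2*x) ^ (-(1/2):ℝ) = u := by
    rw [show (-(1/2):ℝ) = -(1:ℝ)/2 by ring]
  rw [hu']
  linear_combination (3*k*u^5) * hs2 + (k*u^5) * hk4 + (k*u*(3*c*u^2+1)) * hu2

lemma hQtwo (x : ℝ) :
    HasDerivAt (fun y => Q y - Q y ^ 5) ((1 - 5 * Q x ^ 4) * Qone x) x := by
  have h := (hQ x).sub ((hQ x).pow 5)
  refine deriv_congr h ?_
  push_cast
  norm_num
  ring

lemma derivQ : deriv Q = Qone := funext fun x => (hQ x).deriv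

lemma derivQone : deriv Qone = fun y => Q y - Q y ^ 5 := funext fun x => (hQone x).deriv

lemma derivQtwo : deriv (fun y => Q y - Q y ^ 5) = fun x => (1 - 5 * Q x ^ 4) * Qone x :=
  funext fun x => (hQtwo x).deriv

lemma lop_Qone (x : ℝ) : Lop (deriv Q) x = 0 := by
  unfold Lop
  rw [derivQ, derivQone, derivQtwo]
  ring

lemma contQ : Continuous Q :=
  (Differentiable.continuous fun x => (hQ x).differentiableAt)

lemma contQone : Continuous Qone :=
  (Differentiable.continuous fun x => (hQone x).differentiableAt)

lemma cosh_ge (x : ℝ) : 1 + x ^ 2 ≤ Real.cosh (2*x) := by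
  have h1 : |x| ≤ |Real.sinh x| := by
    rw [Real.abs_sinh]
    exact Real.self_le_sinh_iff.mpr (abs_nonneg x)
  have h2 : x ^ 2 ≤ Real.sinh x ^ 2 := by
    rw [← sq_abs x, ← sq_abs (Real.sinh x)]
    exact pow_le_pow_left₀ (abs_nonneg _) h1 2
  have h3 : Real.cosh (2*x) = Real.cosh x ^ 2 + Real.sinh x ^ 2 := Real.cosh_two_mul x
  have h4 : Real.cosh x ^ 2 = 1 + Real.sinh x ^ 2 := Real.cosh_sq' x
  nlinarith

lemma memL2_Q : MemLp Q 2 volume := by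
  rw [memLp_two_iff_integrable_sq contQ.aestronglyMeasurable]
  refine Integrable.mono (integrable_inv_one_add_sq.const_mul 2)
    ((contQ.pow 2).aestronglyMeasurable) (ae_of_all _ fun x => ?_)
  have hk2 : ((3:ℝ)^((1:ℝ)/4)) ^ 2 ≤ 2 := by nlinarith [k4, kpos.le, sq_nonneg ((3:ℝ)^((1:ℝ)/4))]
  have hc : (0:ℝ) < 1 + x ^ 2 := by positivity
  have hinv : (Real.cosh (2*x))⁻¹ ≤ (1 + x^2)⁻¹ :=
    inv_anti₀ hc (cosh_ge x)
  have hu2 : (Real.cosh (2*x) ^ (-(1:ℝ)/2)) ^ 2 = (Real.cosh (2*x))⁻¹ := by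
    have := huc x
    field_simp at this ⊢
    nlinarith [this, Real.cosh_pos (2*x)]
  have hQsq : Q x ^ 2 = ((3:ℝ)^((1:ℝ)/4))^2 * (Real.cosh (2*x))⁻¹ := by
    unfold Q; rw [← hu2]; ring
  rw [Real.norm_eq_abs, Real.norm_eq_abs, abs_of_nonneg (sq_nonneg _), hQsq,
    abs_of_nonneg (by positivity)]
  have : (0:ℝ) ≤ (1+x^2)⁻¹ := by positivity
  nlinarith [Real.cosh_pos (2*x), inv_nonneg.mpr (Real.cosh_pos (2*x)).le]

lemma abs_Qone_le (x : ℝ) : |Qone x| ≤ Q x := by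
  have hs : |Real.sinh (2*x)| ≤ Real.cosh (2*x) := by
    rw [Real.abs_sinh, ← Real.cosh_abs (2*x)]
    exact (Real.sinh_lt_cosh _).le
  have hu := upos x
  have hu2 := huc x
  have : |Qone x| = (3:ℝ)^((1:ℝ)/4) * |Real.sinh (2*x)| * (Real.cosh (2*x) ^ (-(1:ℝ)/2)) ^ 3 := by
    unfold Qone
    rw [abs_mul, abs_mul, abs_neg, abs_of_pos kpos, abs_of_pos (pow_pos hu 3)]
  rw [this]
  have hQx : Q x = (3:ℝ)^((1:ℝ)/4) * Real.cosh (2*x) ^ (-(1:ℝ)/2) := rfl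
  have hcu : Real.cosh (2*x) * (Real.cosh (2*x) ^ (-(1:ℝ)/2)) ^ 3
      = Real.cosh (2*x) ^ (-(1:ℝ)/2) := by
    linear_combination (Real.cosh (2*x) ^ (-(1:ℝ)/2)) * hu2
  nlinarith [kpos, pow_pos hu 3, mul_le_mul_of_nonneg_right hs (pow_pos hu 3).le]

lemma memL2_Qone : MemLp Qone 2 volume := by
  refine memL2_Q.of_le contQone.aestronglyMeasurable (ae_of_all _ fun x => ?_)
  rw [Real.norm_eq_abs, Real.norm_eq_abs]
  have := abs_Qone_le x
  have hQpos : 0 < Q x := mul_pos kpos (upos x)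
  rwa [abs_of_pos hQpos]

lemma memL2_Qtwo : MemLp (fun y => Q y - Q y ^ 5) 2 volume := by
  have h5 : MemLp (fun y => Q y ^ 5) 2 volume := by
    refine (memL2_Q.const_mul 3).of_le
      ((contQ.pow 5).aestronglyMeasurable) (ae_of_all _ fun x => ?_)
    have hQpos : 0 < Q x := mul_pos kpos (upos x)
    have hule : Real.cosh (2*x) ^ (-(1:ℝ)/2) ≤ 1 :=
      Real.rpow_le_one_of_one_le_of_nonpos (Real.one_le_cosh _) (by norm_num)
    have hQ4 : Q x ^ 4 ≤ 3 := by
      have : Q x ^ 4 = ((3:ℝ)^((1:ℝ)/4))^4 * (Real.cosh (2*x) ^ (-(1:ℝ)/2))^4 := by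
        unfold Q; ring
      rw [this, k4]
      nlinarith [upos x, pow_le_one₀ (upos x).le hule (n := 4)]
    rw [Real.norm_eq_abs, Real.norm_eq_abs, abs_of_pos (pow_pos hQpos 5),
      abs_of_pos (by positivity : (0:ℝ) < 3 * Q x)]
    nlinarith [hQpos]
  exact memL2_Q.sub h5

lemma integrable_mul_L2 {f g : ℝ → ℝ} (hf : MemLp f 2 volume) (hg : MemLp g 2 volume) :
    Integrable (fun x => f x * g x) volume := by
  have h : (1:ENNReal)/1 = 1/2 + 1/2 := by
    rw [ENNReal.div_add_div_same, one_add_one_eq_two, ENNReal.div_self (a:=2) (by norm_num) (by norm_num), one_div_one]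
  have := (hg.smul hf : MemLp (f • g) 1 volume)
  exact memLp_one_iff_integrable.mp this

lemma const_of_deriv_zero_on {s : Set ℝ} (hs : s.OrdConnected) {g : ℝ → ℝ}
    (h : ∀ y ∈ s, HasDerivAt g 0 y) {x y : ℝ} (hx : x ∈ s) (hy : y ∈ s) : g x = g y := by
  have key : ∀ a b : ℝ, a ∈ s → b ∈ s → a ≤ b → g b = g a := by
    intro a b ha hb hab
    have hsub : Set.Icc a b ⊆ s := hs.out ha hb
    exact constant_of_has_deriv_right_zero
      (fun t ht => (h t (hsub ht)).continuousAt.continuousWithinAt)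
      (fun t ht => (h t (hsub (Set.mem_Icc.mpr ⟨ht.1, ht.2.le⟩))).hasDerivWithinAt)
      b (Set.mem_Icc.mpr ⟨hab, le_refl b⟩)
  rcases le_total x y with h' | h'
  · exact (key x y hx hy h').symm
  · exact key y x hy hx h'

lemma Qone_zero : Qone 0 = 0 := by
  unfold Qone
  norm_num

lemma Q_zero : Q 0 = (3:ℝ)^((1:ℝ)/4) := by
  unfold Q
  norm_num

lemma Qtwo_zero : Q 0 - Q 0 ^ 5 = (-2) * (3:ℝ)^((1:ℝ)/4) := by
  rw [Q_zero]
  have : ((3:ℝ)^((1:ℝ)/4))^5 = ((3:ℝ)^((1:ℝ)/4))^4 * (3:ℝ)^((1:ℝ)/4) := by ring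
  rw [this, k4]
  ring

lemma Qtwo_zero_ne : Q 0 - Q 0 ^ 5 ≠ 0 := by
  rw [Qtwo_zero]
  have := kpos
  nlinarith

lemma Qone_ne {x : ℝ} (hx : x ≠ 0) : Qone x ≠ 0 := by
  unfold Qone
  have h1 : Real.sinh (2*x) ≠ 0 := by
    rw [Real.sinh_ne_zero]
    intro h
    exact hx (by linarith)
  exact mul_ne_zero (mul_ne_zero (neg_ne_zero.mpr kpos.ne') h1) (pow_pos (upos x) 3).ne'

theorem kernel_part2 (f : ℝ → ℝ) (hf : inH1 f)
    (hdf : ∀ x, DifferentiableAt ℝ f x)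
    (hdf' : ∀ x, DifferentiableAt ℝ (deriv f) x)
    (heq : ∀ x, -(deriv (deriv f) x) + f x - 5 * (Q x)^4 * f x = 0) :
    ∃ a : ℝ, f = fun x => a * deriv Q x := by
  have hF1 : ∀ x, HasDerivAt f (deriv f x) x := fun x => (hdf x).hasDerivAt
  have hF2 : ∀ x, HasDerivAt (deriv f) (deriv (deriv f) x) x := fun x => (hdf' x).hasDerivAt
  have hf'' : ∀ x, deriv (deriv f) x = (1 - 5 * Q x ^ 4) * f x := fun x => by
    linear_combination -(heq x)
  -- The Wronskian
  set W : ℝ → ℝ := fun x => f x * (Q x - Q x ^ 5) - deriv f x * Qone x with hWdef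
  have hW0 : ∀ x, HasDerivAt W 0 x := by
    intro x
    have h := ((hF1 x).mul (hQtwo x)).sub ((hF2 x).mul (hQone x))
    refine deriv_congr h ?_
    rw [hf'' x]
    ring
  have Wconst : ∀ x, W x = W 0 := fun x =>
    is_const_of_deriv_eq_zero (fun y => (hW0 y).differentiableAt) (fun y => (hW0 y).deriv) x 0
  have Wint : Integrable W volume :=
    (integrable_mul_L2 hf.1 memL2_Qtwo).sub (integrable_mul_L2 hf.2 memL2_Qone)
  have Wzero : ∀ x, W x = 0 := by
    have hconst : Integrable (fun _ : ℝ => W 0) volume :=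
      Wint.congr (ae_of_all _ fun x => Wconst x)
    rw [integrable_const_iff] at hconst
    rcases hconst with h | h
    · intro x; rw [Wconst x, h]
    · rw [isFiniteMeasure_iff, Real.volume_univ] at h
      exact absurd h (by simp)
  -- f 0 = 0
  have hf0 : f 0 = 0 := by
    have := Wzero 0
    rw [hWdef] at this
    simp only [Qone_zero, mul_zero, sub_zero] at this
    exact (mul_eq_zero.mp this).resolve_right Qtwo_zero_ne
  -- quotient g = f / Qone constant on each side
  set g : ℝ → ℝ := fun x => f x / Qone x with hgdef
  have hg0 : ∀ y : ℝ, y ≠ 0 → HasDerivAt g 0 y := by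
    intro y hy
    have h := (hF1 y).div (hQone y) (Qone_ne hy)
    refine deriv_congr h ?_
    have hWy : f y * (Q y - Q y ^ 5) - deriv f y * Qone y = 0 := Wzero y
    rw [div_eq_zero_iff]
    left
    linarith
  set a : ℝ := f 1 / Qone 1 with hadef
  set b : ℝ := f (-1) / Qone (-1) with hbdef
  have hpos : ∀ x : ℝ, 0 < x → f x = a * Qone x := by
    intro x hx
    have := const_of_deriv_zero_on Set.ordConnected_Ioi
      (fun y hy => hg0 y (ne_of_gt hy)) (Set.mem_Ioi.mpr hx) (Set.mem_Ioi.mpr one_pos)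
    have hgx : f x / Qone x = f 1 / Qone 1 := this
    rw [div_eq_iff (Qone_ne (ne_of_gt hx))] at hgx
    exact hgx
  have hneg : ∀ x : ℝ, x < 0 → f x = b * Qone x := by
    intro x hx
    have := const_of_deriv_zero_on Set.ordConnected_Iio
      (fun y hy => hg0 y (ne_of_lt hy)) (Set.mem_Iio.mpr hx)
      (Set.mem_Iio.mpr (by norm_num : (-1:ℝ) < 0))
    have hgx : f x / Qone x = f (-1) / Qone (-1) := this
    rw [div_eq_iff (Qone_ne (ne_of_lt hx))] at hgx
    exact hgx
  -- match the one-sided derivatives at 0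
  have keyr : deriv f 0 = a * (Q 0 - Q 0 ^ 5) := by
    have h1 : HasDerivWithinAt f (deriv f 0) (Set.Ici 0) 0 := (hF1 0).hasDerivWithinAt
    have h2 : HasDerivWithinAt (fun x => a * Qone x) (a * (Q 0 - Q 0 ^ 5)) (Set.Ici 0) 0 :=
      ((hQone 0).const_mul a).hasDerivWithinAt
    have h3 : HasDerivWithinAt f (a * (Q 0 - Q 0 ^ 5)) (Set.Ici 0) 0 := by
      refine h2.congr (fun y hy => ?_) ?_
      · rcases eq_or_lt_of_le (Set.mem_Ici.mp hy) with h | h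
        · rw [← h, hf0, Qone_zero]; ring
        · exact hpos y h
      · rw [hf0, Qone_zero]; ring
    have hu := uniqueDiffOn_Ici (0:ℝ) 0 Set.self_mem_Ici
    rw [← h1.derivWithin hu, ← h3.derivWithin hu]
  have keyl : deriv f 0 = b * (Q 0 - Q 0 ^ 5) := by
    have h1 : HasDerivWithinAt f (deriv f 0) (Set.Iic 0) 0 := (hF1 0).hasDerivWithinAt
    have h2 : HasDerivWithinAt (fun x => b * Qone x) (b * (Q 0 - Q 0 ^ 5)) (Set.Iic 0) 0 :=
      ((hQone 0).const_mul b).hasDerivWithinAt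
    have h3 : HasDerivWithinAt f (b * (Q 0 - Q 0 ^ 5)) (Set.Iic 0) 0 := by
      refine h2.congr (fun y hy => ?_) ?_
      · rcases eq_or_lt_of_le (Set.mem_Iic.mp hy) with h | h
        · rw [h, hf0, Qone_zero]; ring
        · exact hneg y h
      · rw [hf0, Qone_zero]; ring
    have hu := uniqueDiffOn_Iic (0:ℝ) 0 Set.self_mem_Iic
    rw [← h1.derivWithin hu, ← h3.derivWithin hu]
  have hab : a = b := by
    have := keyr.symm.trans keyl
    exact mul_right_cancel₀ Qtwo_zero_ne this
  refine ⟨a, funext fun x => ?_⟩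
  rw [derivQ]
  rcases lt_trichotomy x 0 with h | h | h
  · rw [hneg x h, hab]
  · rw [h, hf0, Qone_zero]; ring
  · exact hpos x h

/-- **The kernel of `L` in `H¹(ℝ)` is spanned by `Q'`:** `L(Q') = 0`, and every twice
differentiable `f ∈ H¹(ℝ)` with `-f'' + f - 5Q⁴ f = 0` on `ℝ` is a scalar multiple
of `Q'`. -/
theorem kernel_of_L :
    (∀ x : ℝ, Lop (deriv Q) x = 0) ∧
    ∀ f : ℝ → ℝ, inH1 f →
      (∀ x, DifferentiableAt ℝ f x) →
      (∀ x, DifferentiableAt ℝ (deriv f) x) →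
      (∀ x, -(deriv (deriv f) x) + f x - 5 * (Q x)^4 * f x = 0) →
      ∃ a : ℝ, f = fun x => a * deriv Q x :=
  ⟨lop_Qone, kernel_part2⟩
end
end
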